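/- Let n be a pseudoprime of basis k, and let Π_n := Σ_{d ∣ n} μ(n/d)·k^d, where μ is the Möbius function and the sum is over positive divisors d of n. Then n divides k^n - k - Π_n (as integers). -/

import Mathlib

open Finset ArithmeticFunction

/-- `n` is a pseudoprime of basis `k`: an odd composite number, relatively prime
to `k`, with `n ∣ k^(n-1) - 1`. -/
def IsPseudoprime (k n : ℕ) : Prop :=
  Odd n ∧ 1 < n ∧ ¬ n.Prime ∧ Nat.gcd k n = 1 ∧ (n : ℤ) ∣ (k : ℤ) ^ (n - 1) - 1

/-- Fermat's little theorem for integers. -/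
private lemma int_pow_prime_sub (a : ℤ) {p : ℕ} (hp : p.Prime) : (p : ℤ) ∣ a ^ p - a := by
  haveI : Fact p.Prime := ⟨hp⟩
  rw [← ZMod.intCast_zmod_eq_zero_iff_dvd]
  push_cast
  rw [ZMod.pow_card]
  ring

/-- Key congruence: `a^(p^s u) ≡ a^(p^(s-1) u) mod p^s`. -/
private lemma key_cong (a : ℤ) {p : ℕ} (hp : p.Prime) {s : ℕ} (hs : 1 ≤ s) (u : ℕ) :
    (p : ℤ) ^ s ∣ a ^ (p ^ s * u) - a ^ (p ^ (s - 1) * u) := by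
  obtain ⟨t, rfl⟩ : ∃ t, s = t + 1 := ⟨s - 1, (Nat.succ_pred_eq_of_pos hs).symm⟩
  have h1 : (p : ℤ) ∣ a ^ (p * u) - a ^ u := by
    have h2 : (p : ℤ) ∣ (a ^ u) ^ p - a ^ u := int_pow_prime_sub (a ^ u) hp
    rwa [← pow_mul, mul_comm u p] at h2
  have h3 := dvd_sub_pow_of_dvd_sub h1 t
  rw [← pow_mul, ← pow_mul] at h3
  have e1 : p * u * p ^ t = p ^ (t + 1) * u := by ring
  have e2 : u * p ^ t = p ^ (t + 1 - 1) * u := by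
    simp [mul_comm]
  rwa [e1, e2, ← Nat.cast_pow, Nat.cast_pow] at h3

/-- Prime-power case of Gauss's congruence, per prime factor. -/
private lemma prime_pow_dvd_sum (a : ℤ) {n p : ℕ} (hn : 0 < n) (hp : p.Prime) (hpn : p ∣ n) :
    (p : ℤ) ^ (n.factorization p) ∣
      ∑ e ∈ n.divisors, (moebius e : ℤ) * a ^ (n / e) := by
  set s := n.factorization p with hsdef
  set m := n / p ^ s with hmdef
  have hs : 1 ≤ s := (Nat.Prime.dvd_iff_one_le_factorization hp hn.ne').mp hpn
  have hnm : p ^ s * m = n := Nat.ordProj_mul_ordCompl_eq_self n p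
  have hm0 : 0 < m := Nat.ordCompl_pos p hn.ne'
  have hpm : ¬ p ∣ m := Nat.not_dvd_ordCompl hp hn.ne'
  -- split the divisors of n according to divisibility by p
  rw [← Finset.sum_filter_add_sum_filter_not n.divisors (fun e => p ∣ e)]
  -- the part with p ∤ e is indexed by divisors of m
  have hfilt : {e ∈ n.divisors | ¬ p ∣ e} = m.divisors := by
    ext e
    simp only [mem_filter, Nat.mem_divisors]
    constructor
    · rintro ⟨⟨hen, -⟩, hpe⟩
      refine ⟨?_, hm0.ne'⟩
      have hco : Nat.Coprime e (p ^ s) :=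
        Nat.Coprime.pow_right s (Nat.coprime_comm.mp (hp.coprime_iff_not_dvd.mpr hpe))
      rw [← hnm] at hen
      exact Nat.Coprime.dvd_of_dvd_mul_left hco hen
    · rintro ⟨hem, -⟩
      refine ⟨⟨hem.trans (Nat.ordCompl_dvd n p), hn.ne'⟩, fun hpe => hpm (hpe.trans hem)⟩
  -- the part with p ∣ e reduces to the image of divisors of m under (p * ·)
  have himg : (m.divisors.image (fun t => p * t)) ⊆ {e ∈ n.divisors | p ∣ e} := by
    intro e he
    simp only [Finset.mem_image] at he
    obtain ⟨t, ht, rfl⟩ := he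
    rw [Nat.mem_divisors] at ht
    simp only [mem_filter, Nat.mem_divisors]
    refine ⟨⟨?_, hn.ne'⟩, Dvd.intro t rfl⟩
    rw [← hnm]
    obtain ⟨u, hu⟩ := ht.1
    obtain ⟨t', hst⟩ : ∃ t', s = t' + 1 := ⟨s - 1, (Nat.succ_pred_eq_of_pos hs).symm⟩
    exact ⟨p ^ t' * u, by rw [hst, hu]; ring⟩
  have hsum2 : ∑ e ∈ {e ∈ n.divisors | p ∣ e}, (moebius e : ℤ) * a ^ (n / e)
      = ∑ t ∈ m.divisors, (moebius (p * t) : ℤ) * a ^ (n / (p * t)) := by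
    rw [← Finset.sum_subset himg]
    · rw [Finset.sum_image]
      intro x hx y hy hxy
      exact Nat.eq_of_mul_eq_mul_left hp.pos hxy
    · intro e he hne
      simp only [mem_filter, Nat.mem_divisors] at he
      obtain ⟨⟨hen, -⟩, f, rfl⟩ := he
      have hpf : p ∣ f := by
        by_contra hpf
        apply hne
        rw [Finset.mem_image]
        refine ⟨f, ?_, rfl⟩
        rw [Nat.mem_divisors]
        refine ⟨?_, hm0.ne'⟩
        have hco : Nat.Coprime f (p ^ s) :=
          Nat.Coprime.pow_right s (Nat.coprime_comm.mp (hp.coprime_iff_not_dvd.mpr hpf))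
        have hfn : f ∣ n := (Dvd.intro_left p rfl).trans hen
        rw [← hnm] at hfn
        exact Nat.Coprime.dvd_of_dvd_mul_left hco hfn
      have hsq : ¬ Squarefree (p * f) := by
        intro hsq
        exact hp.not_isUnit (hsq p (mul_dvd_mul_left p hpf))
      rw [moebius_eq_zero_of_not_squarefree hsq]
      simp
  rw [hfilt, hsum2, ← Finset.sum_add_distrib]
  apply Finset.dvd_sum
  intro t ht
  have htm : t ∣ m := (Nat.mem_divisors.mp ht).1
  have hpt : Nat.Coprime p t := hp.coprime_iff_not_dvd.mpr (fun hd => hpm (hd.trans htm))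
  have hmu : (moebius (p * t) : ℤ) = -(moebius t : ℤ) := by
    rw [isMultiplicative_moebius.map_mul_of_coprime hpt, moebius_apply_prime hp]
    ring
  have h1 : n / t = p ^ s * (m / t) := by rw [← hnm, Nat.mul_div_assoc _ htm]
  have h2 : n / (p * t) = p ^ (s - 1) * (m / t) := by
    have hn' : n = p * t * (p ^ (s - 1) * (m / t)) := by
      obtain ⟨u, hu⟩ := htm
      obtain ⟨t', hst⟩ : ∃ t', s = t' + 1 := ⟨s - 1, (Nat.succ_pred_eq_of_pos hs).symm⟩
      have hdiv : m / t = u := by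
        rw [hu]
        exact Nat.mul_div_cancel_left u (Nat.pos_of_mem_divisors ht)
      rw [hdiv, ← hnm, hu, hst, Nat.add_sub_cancel]
      ring
    rw [hn']
    exact Nat.mul_div_cancel_left _ (Nat.mul_pos hp.pos (Nat.pos_of_mem_divisors ht))
  rw [hmu, h1, h2]
  have hkey := key_cong a hp hs (m / t)
  have hring : -(moebius t : ℤ) * a ^ (p ^ (s - 1) * (m / t)) +
      (moebius t : ℤ) * a ^ (p ^ s * (m / t)) =
      (moebius t : ℤ) * (a ^ (p ^ s * (m / t)) - a ^ (p ^ (s - 1) * (m / t))) := by ring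
  rw [hring]
  exact hkey.mul_left _

theorem gauss_congruence (a : ℤ) {n : ℕ} (hn : 0 < n) :
    (n : ℤ) ∣ ∑ e ∈ n.divisors, (moebius e : ℤ) * a ^ (n / e) := by
  have hfact : (n : ℤ) = ∏ p ∈ n.primeFactors, (p : ℤ) ^ n.factorization p := by
    conv_lhs => rw [← Nat.factorization_prod_pow_eq_self hn.ne']
    rw [Finsupp.prod, Nat.support_factorization, Nat.cast_prod]
    push_cast
    rfl
  rw [hfact]
  apply Finset.prod_dvd_of_coprime
  · intro p hp' q hq' hpq
    have hcop : IsCoprime (p : ℤ) (q : ℤ) := by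
      rw [Nat.isCoprime_iff_coprime]
      exact (Nat.coprime_primes (Nat.prime_of_mem_primeFactors hp')
        (Nat.prime_of_mem_primeFactors hq')).mpr hpq
    exact (hcop.pow : IsCoprime _ _)
  · intro p hp'
    exact prime_pow_dvd_sum a hn (Nat.prime_of_mem_primeFactors hp')
      (Nat.dvd_of_mem_primeFactors hp')

/-- If `n` is a pseudoprime of basis `k` and `Π_n = ∑_{d ∣ n} μ(n/d) k^d` is the number
of points of exact period `n` of the circle map, then `n ∣ k^n - k - Π_n`. -/
theorem pseudoprime_dvd_sub_moebius_sum (k n : ℕ) (h : IsPseudoprime k n) :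
    (n : ℤ) ∣ (k : ℤ) ^ n - (k : ℤ)
      - ∑ d ∈ n.divisors, (ArithmeticFunction.moebius (n / d)) * (k : ℤ) ^ d := by
  obtain ⟨-, hn1, -, -, hdvd⟩ := h
  have hn : 0 < n := by omega
  have hS : ∑ d ∈ n.divisors, (moebius (n / d) : ℤ) * (k : ℤ) ^ d
      = ∑ e ∈ n.divisors, (moebius e : ℤ) * (k : ℤ) ^ (n / e) := by
    rw [← Nat.sum_div_divisors n (fun e => (moebius e : ℤ) * (k : ℤ) ^ (n / e))]
    apply Finset.sum_congr rfl
    intro d hd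
    rw [Nat.div_div_self (Nat.mem_divisors.mp hd).1 hn.ne']
  rw [hS]
  have h1 : (n : ℤ) ∣ (k : ℤ) ^ n - (k : ℤ) := by
    have he : (k : ℤ) ^ n - (k : ℤ) = (k : ℤ) * ((k : ℤ) ^ (n - 1) - 1) := by
      rw [mul_sub, mul_one, ← pow_succ', Nat.sub_add_cancel (by omega)]
    rw [he]
    exact hdvd.mul_left _
  exact dvd_sub h1 (gauss_congruence k hn)
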